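/- Fix positive reals X_m ≤ X_n ≤ 2X_m and k > 0 with X_n² − X_m² ≤ k X_m^{4/3}. Define g(x) = √(X_n² − x²) − √(X_m² − x²) − 2kx. Then for all x ∈ [X_m^{2/3}, X_m − X_m^{5/9}] (assuming X_m is large enough that this interval is nonempty and contained in (0, X_m)), g(x) ≤ −(3/2)k; in particular |g(x)| ≥ (3/2)k on that interval. -/

import Mathlib

open Real

set_option maxHeartbeats 1000000

/-- For `X_m ≤ X_n ≤ 2X_m`, `k > 0`, `X_n² − X_m² ≤ kX_m^{4/3}`, the phase derivative
`g(x) = √(X_n² − x²) − √(X_m² − x²) − 2kx` satisfies `g(x) ≤ −(3/2)k`, hence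
`|g(x)| ≥ (3/2)k`, on `[X_m^{2/3}, X_m − X_m^{5/9}]`. -/
theorem phase_derivative_upper_bound_comparable (Xm Xn k : ℝ)
    (hXm : 0 < Xm) (h1 : Xm ≤ Xn) (h2 : Xn ≤ 2 * Xm) (hk : 0 < k)
    (hgap : Xn^2 - Xm^2 ≤ k * Xm ^ ((4:ℝ)/3))
    (hne : Xm ^ ((2:ℝ)/3) ≤ Xm - Xm ^ ((5:ℝ)/9)) :
    ∀ x ∈ Set.Icc (Xm ^ ((2:ℝ)/3)) (Xm - Xm ^ ((5:ℝ)/9)),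
      Real.sqrt (Xn^2 - x^2) - Real.sqrt (Xm^2 - x^2) - 2 * k * x ≤ -(3/2) * k ∧
      (3/2) * k ≤ |Real.sqrt (Xn^2 - x^2) - Real.sqrt (Xm^2 - x^2) - 2 * k * x| := by
  -- First, `1 < Xm`.
  have hXm1 : 1 < Xm := by
    by_contra h
    push_neg at h
    have h59 : (0:ℝ) < Xm ^ ((5:ℝ)/9) := Real.rpow_pos_of_pos hXm _
    have : Xm ^ ((2:ℝ)/3) ≥ Xm := by
      calc Xm = Xm ^ (1:ℝ) := (Real.rpow_one Xm).symm
      _ ≤ Xm ^ ((2:ℝ)/3) := Real.rpow_le_rpow_of_exponent_ge hXm h (by norm_num)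
    linarith
  intro x hx
  obtain ⟨hx1, hx2⟩ := hx
  have h23pos : (0:ℝ) < Xm ^ ((2:ℝ)/3) := Real.rpow_pos_of_pos hXm _
  have h59pos : (0:ℝ) < Xm ^ ((5:ℝ)/9) := Real.rpow_pos_of_pos hXm _
  have hxpos : 0 < x := lt_of_lt_of_le h23pos hx1
  have hxXm : x < Xm := lt_of_le_of_lt hx2 (by linarith)
  set A := Xm^2 - x^2 with hA
  set B := Xn^2 - x^2 with hB
  have hAB : A ≤ B := by
    have : Xm^2 ≤ Xn^2 := by nlinarith
    simp only [hA, hB]; linarith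
  -- lower bound for A
  have hA79 : (Xm ^ ((7:ℝ)/9))^2 ≤ A := by
    have h1' : Xm ^ ((5:ℝ)/9) ≤ Xm - x := by linarith
    have h2' : Xm ^ ((1:ℝ)) ≤ Xm + x := by rw [Real.rpow_one]; linarith
    have hprod : Xm ^ ((5:ℝ)/9) * Xm ^ ((1:ℝ)) ≤ (Xm - x) * (Xm + x) :=
      mul_le_mul h1' h2' (le_of_lt (Real.rpow_pos_of_pos hXm _)) (by linarith)
    have heq : Xm ^ ((5:ℝ)/9) * Xm ^ ((1:ℝ)) = (Xm ^ ((7:ℝ)/9))^2 := by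
      rw [← Real.rpow_add hXm, ← Real.rpow_natCast (Xm ^ ((7:ℝ)/9)) 2,
        ← Real.rpow_mul (le_of_lt hXm)]
      norm_num
    have : (Xm - x) * (Xm + x) = A := by ring
    linarith [heq ▸ hprod, this ▸ hprod]
  have h79pos : (0:ℝ) < Xm ^ ((7:ℝ)/9) := Real.rpow_pos_of_pos hXm _
  have hApos : 0 < A := lt_of_lt_of_le (by positivity) hA79
  have hsA : Xm ^ ((7:ℝ)/9) ≤ Real.sqrt A := by
    have := Real.sqrt_le_sqrt hA79
    rwa [Real.sqrt_sq (le_of_lt h79pos)] at this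
  have hsApos : 0 < Real.sqrt A := lt_of_lt_of_le h79pos hsA
  -- key sqrt bound
  set c := (B - A) / (2 * Real.sqrt A) with hc
  have hcnonneg : 0 ≤ c := div_nonneg (by linarith) (by positivity)
  have hsqrtB : Real.sqrt B ≤ Real.sqrt A + c := by
    have hsq : B ≤ (Real.sqrt A + c)^2 := by
      have hAsq : (Real.sqrt A)^2 = A := Real.sq_sqrt (le_of_lt hApos)
      have : 2 * Real.sqrt A * c = B - A := by
        rw [hc]; field_simp
      nlinarith [sq_nonneg c]
    calc Real.sqrt B ≤ Real.sqrt ((Real.sqrt A + c)^2) := Real.sqrt_le_sqrt hsq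
    _ = Real.sqrt A + c := Real.sqrt_sq (by positivity)
  -- bound c
  have hBA : B - A = Xn^2 - Xm^2 := by simp only [hA, hB]; ring
  have hnum0 : 0 ≤ Xn^2 - Xm^2 := by nlinarith
  have hcbound : c ≤ k / 2 * Xm ^ ((5:ℝ)/9) := by
    have hstep : c ≤ (k * Xm ^ ((4:ℝ)/3)) / (2 * Xm ^ ((7:ℝ)/9)) := by
      rw [hc, hBA]
      apply div_le_div₀ (by positivity) hgap (by positivity)
      linarith
    have heq : (k * Xm ^ ((4:ℝ)/3)) / (2 * Xm ^ ((7:ℝ)/9)) = k / 2 * Xm ^ ((5:ℝ)/9) := by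
      rw [show ((5:ℝ)/9) = (4:ℝ)/3 - (7:ℝ)/9 by norm_num, Real.rpow_sub hXm]
      field_simp
    linarith
  -- finish
  have h5923 : Xm ^ ((5:ℝ)/9) ≤ Xm ^ ((2:ℝ)/3) :=
    Real.rpow_le_rpow_of_exponent_le (le_of_lt hXm1) (by norm_num)
  have h23ge1 : (1:ℝ) ≤ Xm ^ ((2:ℝ)/3) := Real.one_le_rpow (le_of_lt hXm1) (by norm_num)
  have hg : Real.sqrt B - Real.sqrt A - 2 * k * x ≤ -(3/2) * k := by
    have hxk : 2 * k * Xm ^ ((2:ℝ)/3) ≤ 2 * k * x := by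
      apply mul_le_mul_of_nonneg_left hx1 (by linarith)
    have : Real.sqrt B - Real.sqrt A ≤ c := by linarith
    calc Real.sqrt B - Real.sqrt A - 2 * k * x ≤ k / 2 * Xm ^ ((5:ℝ)/9) - 2 * k * Xm ^ ((2:ℝ)/3) := by
          linarith
    _ ≤ k / 2 * Xm ^ ((2:ℝ)/3) - 2 * k * Xm ^ ((2:ℝ)/3) := by
          have := mul_le_mul_of_nonneg_left h5923 (le_of_lt (half_pos hk))
          linarith
    _ = -(3/2) * k * Xm ^ ((2:ℝ)/3) := by ring
    _ ≤ -(3/2) * k * 1 := by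
          have := mul_le_mul_of_nonneg_left h23ge1 (by linarith : (0:ℝ) ≤ (3/2) * k)
          nlinarith
    _ = -(3/2) * k := by ring
  refine ⟨hg, ?_⟩
  have : (3/2) * k ≤ -(Real.sqrt B - Real.sqrt A - 2 * k * x) := by linarith
  calc (3/2) * k ≤ -(Real.sqrt B - Real.sqrt A - 2 * k * x) := this
  _ ≤ |Real.sqrt B - Real.sqrt A - 2 * k * x| := neg_le_abs _
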